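/- Popping a 0 from a stack can be computed by one saturated-sigmoid affine step: for every nonempty binary stack γ whose top symbol is 0, σ(10·enc(γ) − 1) = enc(γ'), where γ' is the stack obtained from γ by removing its top symbol. -/

import Mathlib

/-- Digit encoding of a stack symbol: `d 0 = 1`, `d 1 = 3`. -/
def d (b : Bool) : ℚ := if b then 3 else 1

/-- Base-ten encoding of a binary stack (top symbol is the last element):
`enc (γ₁ ⋯ γ_N) = Σ_{i=1}^N d(γᵢ) · 10^{-(N-i+1)}`. -/
def enc (γ : List Bool) : ℚ := γ.foldl (fun acc b => acc / 10 + d b / 10) 0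

/-- The saturated sigmoid. -/
def sat (x : ℚ) : ℚ := if x < 0 then 0 else if x ≤ 1 then x else 1

lemma foldl_bounds (γ : List Bool) (a : ℚ) (h0 : 0 ≤ a) (h1 : a ≤ 1/2) :
    0 ≤ γ.foldl (fun acc b => acc / 10 + d b / 10) a ∧
      γ.foldl (fun acc b => acc / 10 + d b / 10) a ≤ 1/2 := by
  induction γ generalizing a with
  | nil => exact ⟨h0, h1⟩
  | cons b t ih =>
    apply ih
    · have : 0 ≤ d b := by cases b <;> simp [d]
      positivity
    · have : d b ≤ 3 := by cases b <;> norm_num [d]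
      simp only []
      linarith

lemma enc_bounds (γ : List Bool) : 0 ≤ enc γ ∧ enc γ ≤ 1/2 :=
  foldl_bounds γ 0 le_rfl (by norm_num)

lemma enc_append (γ : List Bool) (b : Bool) :
    enc (γ ++ [b]) = enc γ / 10 + d b / 10 := by
  simp [enc, List.foldl_append]

theorem pop_zero (γ : List Bool) (h : γ.getLast? = some false) :
    sat (10 * enc γ - 1) = enc γ.dropLast := by
  have hne : γ ≠ [] := by rintro rfl; simp at h
  have hγ : γ = γ.dropLast ++ [false] := by
    conv_lhs => rw [← List.dropLast_append_getLast hne]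
    have : γ.getLast hne = false := by
      have := List.getLast?_eq_getLast hne
      rw [h] at this
      exact (Option.some_injective _ this.symm)
    rw [this]
  have hb := enc_bounds γ.dropLast
  rw [hγ, enc_append]
  have : 10 * (enc γ.dropLast / 10 + d false / 10) - 1 = enc γ.dropLast := by
    norm_num [d]; ring
  rw [this, sat, if_neg (by linarith [hb.1]), if_pos (by linarith [hb.2]), List.dropLast_concat]
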